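/- Let a < b < c be positive integers with gcd(a,b,c) = 1 and c ∉ {2a, 2b, a + b}. Then there exists a real θ with cos cθ = −1 and cos aθ + cos bθ ≤ −1/2; in particular cos aθ + cos bθ + cos cθ ≤ −3/2. -/

import Mathlib

open Real

private lemma cos_sum_zero (c m : ℕ) (hc : 0 < c) (hm : ¬ c ∣ m) :
    ∑ j ∈ Finset.range c, Real.cos ((m : ℝ) * ((2 * (j:ℝ) + 1) * π / c)) = 0 := by
  have hc' : (c : ℝ) ≠ 0 := Nat.cast_ne_zero.mpr hc.ne'
  have hπ : (π : ℝ) ≠ 0 := Real.pi_ne_zero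
  have hcC : (c : ℂ) ≠ 0 := Nat.cast_ne_zero.mpr hc.ne'
  set z : ℂ := Complex.exp (((2 * m * π / c : ℝ) : ℂ) * Complex.I) with hzdef
  have hz1 : z ≠ 1 := by
    intro h
    rw [hzdef, Complex.exp_eq_one_iff] at h
    obtain ⟨n, hn⟩ := h
    have him := congrArg Complex.im hn
    simp [Complex.mul_I_im] at him
    apply hm
    have hmn : (m : ℝ) = n * c := by
      field_simp at him
      nlinarith [him, Real.pi_pos]
    have hmn' : (m : ℤ) = n * c := by exact_mod_cast hmn
    exact Int.natCast_dvd_natCast.mp ⟨n, by linarith [hmn']⟩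
  have hzc : z ^ c = 1 := by
    rw [hzdef, ← Complex.exp_nat_mul]
    have h : (c : ℂ) * (((2 * m * π / c : ℝ) : ℂ) * Complex.I) = (m : ℤ) * (2 * π * Complex.I) := by
      push_cast
      field_simp
    rw [h, Complex.exp_int_mul_two_pi_mul_I]
  have hgeom : ∑ j ∈ Finset.range c, z ^ j = 0 := by
    rw [geom_sum_eq hz1, hzc]
    simp
  have hterm : ∀ j : ℕ, Real.cos ((m : ℝ) * ((2 * (j:ℝ) + 1) * π / c)) =
      (Complex.exp (((m * π / c : ℝ) : ℂ) * Complex.I) * z ^ j).re := by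
    intro j
    rw [hzdef, ← Complex.exp_nat_mul, ← Complex.exp_add,
      ← Complex.exp_ofReal_mul_I_re]
    congr 2
    push_cast
    ring
  calc ∑ j ∈ Finset.range c, Real.cos ((m : ℝ) * ((2 * (j:ℝ) + 1) * π / c))
      = (∑ j ∈ Finset.range c, Complex.exp (((m * π / c : ℝ) : ℂ) * Complex.I) * z ^ j).re := by
        rw [Complex.re_sum]
        exact Finset.sum_congr rfl fun j _ => hterm j
    _ = 0 := by rw [← Finset.mul_sum, hgeom, mul_zero, Complex.zero_re]

theorem stmt_10 (a b c : ℕ) (ha : 0 < a) (hab : a < b) (hbc : b < c)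
    (hgcd : Nat.gcd (Nat.gcd a b) c = 1)
    (h1 : c ≠ 2 * a) (h2 : c ≠ 2 * b) (h3 : c ≠ a + b) :
    ∃ θ : ℝ, cos (c * θ) = -1 ∧ cos (a * θ) + cos (b * θ) ≤ -1/2 ∧
      cos (a * θ) + cos (b * θ) + cos (c * θ) ≤ -3/2 := by
  have hc : 0 < c := by omega
  have hc' : (c : ℝ) ≠ 0 := Nat.cast_ne_zero.mpr hc.ne'
  set θj : ℕ → ℝ := fun j => (2 * (j:ℝ) + 1) * π / c with hθdef
  set f : ℕ → ℝ := fun j => Real.cos (a * θj j) + Real.cos (b * θj j) with hfdef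
  -- non-divisibility facts
  have hda : ¬ c ∣ a := fun h => by have := Nat.le_of_dvd ha h; omega
  have hdb : ¬ c ∣ b := fun h => by have := Nat.le_of_dvd (by omega) h; omega
  have hdvd2 : ∀ m : ℕ, 0 < m → m < 2 * c → m ≠ c → ¬ c ∣ m := by
    intro m hm0 hm2 hmc ⟨k, hk⟩
    have hk2 : c * k < c * 2 := by omega
    have := Nat.lt_of_mul_lt_mul_left hk2
    interval_cases k <;> omega
  have hd2a : ¬ c ∣ 2 * a := hdvd2 _ (by omega) (by omega) (fun h => h1 h.symm)
  have hd2b : ¬ c ∣ 2 * b := hdvd2 _ (by omega) (by omega) (fun h => h2 h.symm)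
  have hdab : ¬ c ∣ a + b := hdvd2 _ (by omega) (by omega) (fun h => h3 h.symm)
  have hdba : ¬ c ∣ b - a := fun h => by have := Nat.le_of_dvd (by omega) h; omega
  -- first moment
  have hS1 : ∑ j ∈ Finset.range c, f j = 0 := by
    have h1' := cos_sum_zero c a hc hda
    have h2' := cos_sum_zero c b hc hdb
    simp only [hfdef, hθdef]
    rw [Finset.sum_add_distrib, h1', h2', add_zero]
  -- second moment
  have hS2 : ∑ j ∈ Finset.range c, f j ^ 2 = c := by
    have hpt : ∀ j : ℕ, f j ^ 2 =
        1 + Real.cos (((2*a : ℕ) : ℝ) * θj j) / 2 + Real.cos (((2*b : ℕ) : ℝ) * θj j) / 2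
          + Real.cos (((a + b : ℕ) : ℝ) * θj j) + Real.cos (((b - a : ℕ) : ℝ) * θj j) := by
      intro j
      have e1 : ((2*a : ℕ) : ℝ) * θj j = 2 * ((a:ℝ) * θj j) := by push_cast; ring
      have e2 : ((2*b : ℕ) : ℝ) * θj j = 2 * ((b:ℝ) * θj j) := by push_cast; ring
      have e3 : ((a + b : ℕ) : ℝ) * θj j = (a:ℝ) * θj j + (b:ℝ) * θj j := by push_cast; ring
      have e4 : ((b - a : ℕ) : ℝ) * θj j = (b:ℝ) * θj j - (a:ℝ) * θj j := by
        rw [Nat.cast_sub hab.le]; ring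
      rw [e1, e2, e3, e4, Real.cos_two_mul, Real.cos_two_mul, Real.cos_add, Real.cos_sub]
      simp only [hfdef]
      ring_nf
    have z1 := cos_sum_zero c (2*a) hc hd2a
    have z2 := cos_sum_zero c (2*b) hc hd2b
    have z3 := cos_sum_zero c (a+b) hc hdab
    have z4 := cos_sum_zero c (b-a) hc hdba
    calc ∑ j ∈ Finset.range c, f j ^ 2
        = ∑ j ∈ Finset.range c, (1 + Real.cos (((2*a : ℕ) : ℝ) * θj j) / 2
            + Real.cos (((2*b : ℕ) : ℝ) * θj j) / 2
            + Real.cos (((a + b : ℕ) : ℝ) * θj j) + Real.cos (((b - a : ℕ) : ℝ) * θj j)) :=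
          Finset.sum_congr rfl fun j _ => hpt j
      _ = c := by
          simp only [Finset.sum_add_distrib]
          rw [← Finset.sum_div, ← Finset.sum_div]
          simp only [hθdef] at z1 z2 z3 z4 ⊢
          rw [z1, z2, z3, z4]
          simp
  -- extract a good index
  have hub : ∀ j, f j ≤ 2 := by
    intro j
    have := Real.cos_le_one ((a:ℝ) * θj j)
    have := Real.cos_le_one ((b:ℝ) * θj j)
    simp only [hfdef]; linarith
  have hex : ∃ j ∈ Finset.range c, f j ≤ -1/2 := by
    by_contra hcon
    push_neg at hcon
    have hsum0 : ∑ j ∈ Finset.range c, (2 - f j) * (f j + 1/2) = 0 := by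
      have : ∀ j, (2 - f j) * (f j + 1/2) = 3/2 * f j + 1 - f j ^ 2 := by intro j; ring
      rw [Finset.sum_congr rfl fun j _ => this j]
      simp only [Finset.sum_add_distrib, Finset.sum_sub_distrib, ← Finset.mul_sum, hS1, hS2]
      simp
    have hnn : ∀ j ∈ Finset.range c, 0 ≤ (2 - f j) * (f j + 1/2) := by
      intro j hj
      exact mul_nonneg (by linarith [hub j]) (by linarith [hcon j hj])
    have hall := (Finset.sum_eq_zero_iff_of_nonneg hnn).mp hsum0
    have hall2 : ∀ j ∈ Finset.range c, f j = 2 := by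
      intro j hj
      have h0 := hall j hj
      have := hcon j hj
      have h2f : (2 - f j) = 0 := by
        rcases mul_eq_zero.mp h0 with h | h
        · exact h
        · linarith
      linarith
    have : ∑ j ∈ Finset.range c, f j = 2 * c := by
      rw [Finset.sum_congr rfl hall2]
      simp [mul_comm]
    rw [hS1] at this
    have : (0:ℝ) < c := by positivity
    nlinarith
  obtain ⟨j, hj, hfj⟩ := hex
  refine ⟨θj j, ?_, ?_, ?_⟩
  · have : (c : ℝ) * θj j = (j:ℝ) * (2 * π) + π := by
      simp only [hθdef]; field_simp
    rw [this]
    rw [Real.cos_add_pi]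
    rw [show ((j:ℝ) * (2 * π)) = ((j:ℕ):ℝ) * (2*π) from rfl, Real.cos_nat_mul_two_pi]
  · exact hfj
  · have hcos : Real.cos ((c:ℝ) * θj j) = -1 := by
      have : (c : ℝ) * θj j = (j:ℝ) * (2 * π) + π := by
        simp only [hθdef]; field_simp
      rw [this, Real.cos_add_pi,
        show ((j:ℝ) * (2 * π)) = ((j:ℕ):ℝ) * (2*π) from rfl, Real.cos_nat_mul_two_pi]
    rw [hcos]
    simp only [hfdef] at hfj
    linarith
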